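/- Let K be a compact subset of ℝⁿ, M a real n×n matrix all of whose complex eigenvalues have modulus > 1, b ∈ ℝⁿ, and g(v) = Mv + b with fixed point p ∈ K. Then for every v ∈ K with v ≠ p, there exists k ≥ 1 such that gᵏ(v) ∉ K. -/

import Mathlib

lemma spec_iff_charpoly_root {n : ℕ} (A : Matrix (Fin n) (Fin n) ℂ) (z : ℂ) :
    z ∈ spectrum ℂ A ↔ A.charpoly.IsRoot z := by
  have hev : A.charpoly.eval z = (Matrix.scalar (Fin n) z - A).det := by
    rw [Matrix.charpoly, ← Polynomial.coe_evalRingHom, RingHom.map_det]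
    congr 1
    ext i j
    by_cases hij : i = j <;>
      simp [Matrix.charmatrix_apply, Matrix.scalar_apply, Matrix.diagonal_apply, hij]
  rw [spectrum.mem_iff, Polynomial.IsRoot, hev]
  rw [Matrix.isUnit_iff_isUnit_det, isUnit_iff_ne_zero, not_ne_iff]
  congr! 2

open Filter ENNReal in
lemma norm_pow_tendsto_zero {B : Type*} [NormedRing B] [NormedAlgebra ℂ B] [CompleteSpace B]
    (a : B) (h : spectralRadius ℂ a < 1) :
    Filter.Tendsto (fun k : ℕ => ‖a ^ k‖) Filter.atTop (nhds 0) := by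
  obtain ⟨c, hc1, hc2⟩ := ENNReal.lt_iff_exists_nnreal_btwn.mp h
  have hlim := spectrum.limsup_pow_nnnorm_pow_one_div_le_spectralRadius a
  have hev : ∀ᶠ k : ℕ in atTop, (‖a ^ k‖₊ : ℝ≥0∞) ^ (1 / (k : ℝ)) < (c : ℝ≥0∞) :=
    Filter.eventually_lt_of_limsup_lt (lt_of_le_of_lt hlim hc1)
  have hc2' : (c : ℝ) < 1 := by exact_mod_cast (ENNReal.coe_lt_one_iff.mp hc2)
  have hbound : ∀ᶠ k : ℕ in atTop, ‖a ^ k‖ ≤ (c : ℝ) ^ k := by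
    filter_upwards [hev, Filter.eventually_ge_atTop 1] with k hk hk1
    have hk0 : (k : ℝ) ≠ 0 := by positivity
    have : ((‖a ^ k‖₊ : ℝ≥0∞) ^ (1 / (k : ℝ))) ^ (k : ℝ) < (c : ℝ≥0∞) ^ (k : ℝ) := by
      apply ENNReal.rpow_lt_rpow hk ?_
      positivity
    rw [← ENNReal.rpow_mul, one_div, inv_mul_cancel₀ hk0, ENNReal.rpow_one,
      ENNReal.rpow_natCast, ← ENNReal.coe_pow, ENNReal.coe_lt_coe] at this
    exact_mod_cast this.le
  have hc0 : (0:ℝ) ≤ c := c.coe_nonneg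
  exact squeeze_zero' (Filter.Eventually.of_forall fun k => norm_nonneg _) hbound
    (tendsto_pow_atTop_nhds_zero_of_lt_one hc0 hc2')

lemma mulVec_complexify {n : ℕ} (M : Matrix (Fin n) (Fin n) ℝ) (x : Fin n → ℝ) :
    (M.map (Complex.ofReal ·)).mulVec (fun i => ((x i : ℝ) : ℂ)) =
      fun i => (((M.mulVec x) i : ℝ) : ℂ) := by
  funext i
  simp [Matrix.mulVec, dotProduct, Matrix.map_apply]

lemma pow_mulVec_complexify {n : ℕ} (M : Matrix (Fin n) (Fin n) ℝ) (x : Fin n → ℝ) (k : ℕ) :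
    ((M.map (Complex.ofReal ·)) ^ k).mulVec (fun i => ((x i : ℝ) : ℂ)) =
      fun i => ((((M ^ k).mulVec x) i : ℝ) : ℂ) := by
  induction k with
  | zero => simp [Matrix.one_mulVec]
  | succ k ih =>
      rw [pow_succ', pow_succ', ← Matrix.mulVec_mulVec, ← Matrix.mulVec_mulVec, ih,
        mulVec_complexify]

open Filter in

/-- Let `K ⊆ ℝⁿ` be compact, `M` a real `n×n` matrix all of whose complex
eigenvalues have modulus `> 1`, and `g(v) = Mv + b` with fixed point `p ∈ K`. Then every
`v ∈ K` with `v ≠ p` has some iterate `gᵏ(v)`, `k ≥ 1`, outside `K`. -/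
theorem expanding_affine_escapes_compact (n : ℕ) (K : Set (Fin n → ℝ)) (hK : IsCompact K)
    (M : Matrix (Fin n) (Fin n) ℝ)
    (hM : ∀ z : ℂ, (M.map (Complex.ofReal ·)).charpoly.IsRoot z → 1 < ‖z‖)
    (b : Fin n → ℝ) (g : (Fin n → ℝ) → (Fin n → ℝ))
    (hg : ∀ v, g v = M.mulVec v + b)
    (p : Fin n → ℝ) (hp : g p = p) (hpK : p ∈ K)
    (v : Fin n → ℝ) (hvK : v ∈ K) (hv : v ≠ p) :
    ∃ k : ℕ, 1 ≤ k ∧ g^[k] v ∉ K := by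
  have hiter : ∀ k : ℕ, g^[k] v = (M ^ k).mulVec (v - p) + p := by
    intro k
    induction k with
    | zero => simp [Matrix.one_mulVec]
    | succ k ih =>
        have hfix : M.mulVec p + b = p := by rw [← hg p, hp]
        rw [Function.iterate_succ_apply', ih, hg, Matrix.mulVec_add, Matrix.mulVec_mulVec,
          ← pow_succ', add_assoc, hfix]
  by_contra hcon
  push_neg at hcon
  rcases Nat.eq_zero_or_pos n with hn | hn
  · subst hn; exact hv (Subsingleton.elim v p)
  set A : Matrix (Fin n) (Fin n) ℂ := M.map (Complex.ofReal ·) with hA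
  have hspecA : ∀ z ∈ spectrum ℂ A, 1 < ‖z‖ := by
    intro z hz
    simpa using hM z ((spec_iff_charpoly_root A z).mp hz)
  have hAu : IsUnit A := by
    by_contra hAu
    have h0 : (0 : ℂ) ∈ spectrum ℂ A := (spectrum.zero_mem_iff ℂ).mpr hAu
    exact absurd (hspecA 0 h0) (by norm_num)
  set S : EuclideanSpace ℂ (Fin n) →L[ℂ] EuclideanSpace ℂ (Fin n) :=
    Matrix.toEuclideanCLM (𝕜 := ℂ) A with hS
  have hspecS : ∀ z ∈ spectrum ℂ S, 1 < ‖z‖ := by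
    rw [hS, AlgEquiv.spectrum_eq (Matrix.toEuclideanCLM (𝕜 := ℂ) (n := Fin n)) A]
    exact hspecA
  have hSu : IsUnit S := hAu.map (Matrix.toEuclideanCLM (𝕜 := ℂ))
  obtain ⟨su, hsu⟩ := hSu
  set U : EuclideanSpace ℂ (Fin n) →L[ℂ] EuclideanSpace ℂ (Fin n) := ↑(su⁻¹) with hU
  have hspecU : ∀ z ∈ spectrum ℂ U, ‖z‖₊ < 1 := by
    intro z hz
    have hz0 : z ≠ 0 := by
      rintro rfl
      exact spectrum.zero_notMem ℂ (su⁻¹).isUnit hz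
    lift z to ℂˣ using (isUnit_iff_ne_zero.mpr hz0) with zu
    have hmem : (↑(zu⁻¹) : ℂ) ∈ spectrum ℂ (↑su :
        EuclideanSpace ℂ (Fin n) →L[ℂ] EuclideanSpace ℂ (Fin n)) := by
      rw [spectrum.inv_mem_iff]
      simpa using hz
    have hinv : (1 : ℝ) < ‖(↑(zu⁻¹) : ℂ)‖ := by
      apply hspecS
      rwa [hsu] at hmem
    have : ‖(↑zu : ℂ)‖ < 1 := by
      rw [Units.val_inv_eq_inv_val, norm_inv, one_lt_inv_iff₀] at hinv
      exact hinv.2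
    simpa [← NNReal.coe_lt_coe] using this
  haveI : Nonempty (Fin n) := Fin.pos_iff_nonempty.mp hn
  haveI : Nontrivial (EuclideanSpace ℂ (Fin n)) := inferInstance
  have hrad : spectralRadius ℂ U < 1 := by
    simpa using spectrum.spectralRadius_lt_of_forall_lt U (r := 1) hspecU
  have hdecay := norm_pow_tendsto_zero U hrad
  set w : EuclideanSpace ℂ (Fin n) :=
    (WithLp.equiv 2 (Fin n → ℂ)).symm (fun i => (((v - p) i : ℝ) : ℂ)) with hw
  have hw0 : w ≠ 0 := by
    intro h0
    apply hv
    funext i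
    have h1 := congrFun (congrArg (WithLp.equiv 2 (Fin n → ℂ)) h0) i
    simp only [hw, Equiv.apply_symm_apply] at h1
    have h2 : ((v - p) i : ℂ) = 0 := by simpa using h1
    have h3 := Complex.ofReal_eq_zero.mp h2
    simpa [sub_eq_zero] using h3
  have hSkw : ∀ k : ℕ, (S ^ k) w =
      (WithLp.equiv 2 (Fin n → ℂ)).symm
        (fun i => ((((M ^ k).mulVec (v - p)) i : ℝ) : ℂ)) := by
    intro k
    rw [hS, ← map_pow (Matrix.toEuclideanCLM (𝕜 := ℂ)) A k, hw,
      WithLp.equiv_symm_apply, Matrix.toEuclideanCLM_toLp]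
    congr 1
    rw [hA, pow_mulVec_complexify]
  obtain ⟨R, hR⟩ := hK.isBounded.exists_norm_le
  set C : ℝ := R + ‖p‖ with hC
  have hC0 : 0 ≤ C := by
    have := hR p hpK
    have := norm_nonneg p
    linarith
  set C' : ℝ := Real.sqrt (n * C ^ 2) with hC'
  have hC'0 : 0 ≤ C' := Real.sqrt_nonneg _
  have hbk : ∀ k : ℕ, 1 ≤ k → ‖(S ^ k) w‖ ≤ C' := by
    intro k hk
    rw [hSkw k]
    have hy : (M ^ k).mulVec (v - p) = g^[k] v - p := by rw [hiter k]; abel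
    have hyb : ∀ i, |((M ^ k).mulVec (v - p)) i| ≤ C := by
      intro i
      have h1 : |((M ^ k).mulVec (v - p)) i| ≤ ‖(M ^ k).mulVec (v - p)‖ := by
        simpa [Real.norm_eq_abs] using norm_le_pi_norm ((M ^ k).mulVec (v - p)) i
      have h2 : ‖(M ^ k).mulVec (v - p)‖ ≤ ‖g^[k] v‖ + ‖p‖ := by
        rw [hy]; exact norm_sub_le _ _
      have h3 := hR _ (hcon k hk)
      calc |((M ^ k).mulVec (v - p)) i| ≤ ‖g^[k] v‖ + ‖p‖ := h1.trans h2
        _ ≤ R + ‖p‖ := by linarith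
    rw [EuclideanSpace.norm_eq]
    apply Real.sqrt_le_sqrt
    calc ∑ i, ‖(((WithLp.equiv 2 (Fin n → ℂ)).symm
          (fun i => ((((M ^ k).mulVec (v - p)) i : ℝ) : ℂ))) i)‖ ^ 2
        ≤ ∑ _i : Fin n, C ^ 2 := by
          apply Finset.sum_le_sum
          intro i _
          have : ‖((((M ^ k).mulVec (v - p)) i : ℝ) : ℂ)‖ = |((M ^ k).mulVec (v - p)) i| := by
            simp [Complex.norm_real, Real.norm_eq_abs]
          rw [show (((WithLp.equiv 2 (Fin n → ℂ)).symm
            (fun i => ((((M ^ k).mulVec (v - p)) i : ℝ) : ℂ))) i) =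
            ((((M ^ k).mulVec (v - p)) i : ℝ) : ℂ) from rfl, this]
          have := hyb i
          have habs : (0:ℝ) ≤ |((M ^ k).mulVec (v - p)) i| := abs_nonneg _
          nlinarith
      _ = n * C ^ 2 := by simp [Finset.sum_const, Finset.card_univ, mul_comm]
  have hUS : U * S = 1 := by
    rw [hU, ← hsu, ← Units.val_mul, inv_mul_cancel]
    rfl
  have hSU : S * U = 1 := by
    rw [hU, ← hsu, ← Units.val_mul, mul_inv_cancel]
    rfl
  have hcomm : Commute U S := by
    unfold Commute SemiconjBy
    rw [hUS, hSU]
  have hinvk : ∀ k : ℕ, (U ^ k) ((S ^ k) w) = w := by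
    intro k
    have : (U ^ k) * (S ^ k) = 1 := by
      rw [← hcomm.mul_pow, hUS, one_pow]
    calc (U ^ k) ((S ^ k) w) = ((U ^ k) * (S ^ k)) w := rfl
      _ = w := by rw [this]; rfl
  have hwlek : ∀ k : ℕ, 1 ≤ k → ‖w‖ ≤ ‖U ^ k‖ * C' := by
    intro k hk
    calc ‖w‖ = ‖(U ^ k) ((S ^ k) w)‖ := by rw [hinvk k]
      _ ≤ ‖U ^ k‖ * ‖(S ^ k) w‖ := ContinuousLinearMap.le_opNorm _ _
      _ ≤ ‖U ^ k‖ * C' := by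
          exact mul_le_mul_of_nonneg_left (hbk k hk) (norm_nonneg _)
  have hwpos : 0 < ‖w‖ := norm_pos_iff.mpr hw0
  have hεpos : 0 < ‖w‖ / (C' + 1) := by positivity
  have hev : ∀ᶠ k : ℕ in atTop, ‖U ^ k‖ < ‖w‖ / (C' + 1) :=
    hdecay.eventually (gt_mem_nhds hεpos)
  obtain ⟨k, hk2, hk1⟩ := (hev.and (eventually_ge_atTop 1)).exists
  have h5 : ‖U ^ k‖ * C' ≤ (‖w‖ / (C' + 1)) * C' :=
    mul_le_mul_of_nonneg_right hk2.le hC'0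
  have h6 : (‖w‖ / (C' + 1)) * C' < ‖w‖ := by
    rw [div_mul_eq_mul_div, div_lt_iff₀ (by positivity)]
    nlinarith
  have := hwlek k hk1
  linarith
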